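/- arXiv:math/0310130 — 2 statements merged into one kernel-verified Lean document; each statement's English description precedes it below -/
import Mathlib

section
/- Let W be an m×n integer matrix whose rows are ℤ-linearly independent and none of whose columns is zero, and let Γ ⊆ ℤ^m be the additive submonoid generated by the columns of W (that is, Γ = {W·α : α ∈ ℕ^n}, the set of degrees d with P_{W,d} ≠ 0). Then the restriction of the lexicographic order Lex to Γ is a well-ordering (every nonempty subset of Γ has a Lex-least element) if and only if every nonzero element d ∈ Γ satisfies 0 <_Lex d. -/
open MvPolynomial

/-- The `W`-degree of an exponent vector `α ∈ ℕ^n`: `W·α = ∑ⱼ αⱼ w⁽ʲ⁾ ∈ ℤ^m`. -/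
def wdeg {m n : ℕ} (W : Matrix (Fin m) (Fin n) ℤ) (α : Fin n →₀ ℕ) : Fin m → ℤ :=
  fun i => ∑ j, (α j : ℤ) * W i j

/-- A polynomial is `W`-homogeneous of degree `d ∈ ℤ^m` if every monomial in its support
has `W`-degree `d`. -/
def IsWHomogeneous {K : Type*} [CommSemiring K] {m n : ℕ} (W : Matrix (Fin m) (Fin n) ℤ)
    (p : MvPolynomial (Fin n) K) (d : Fin m → ℤ) : Prop :=
  ∀ α ∈ p.support, wdeg W α = d


lemma lex_trichotomy {m : ℕ} (a b : Lex (Fin m → ℤ)) : a < b ∨ a = b ∨ b < a :=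
  lt_trichotomy a b

lemma lex_le_of_not_lt {m : ℕ} {a b : Lex (Fin m → ℤ)} (h : ¬a < b) : b ≤ a := by
  rcases lex_trichotomy a b with h' | h' | h'
  · exact absurd h' h
  · exact h'.ge
  · exact h'.le

lemma wdeg_add {m n : ℕ} (W : Matrix (Fin m) (Fin n) ℤ) (α β : Fin n →₀ ℕ) :
    wdeg W (α + β) = wdeg W α + wdeg W β := by
  funext i
  simp [wdeg, Finsupp.add_apply, add_mul, Finset.sum_add_distrib]

/-- Let `W` have `ℤ`-linearly independent rows and no zero column, and let
`Γ = {W·α : α ∈ ℕ^n} ⊆ ℤ^m` be the monoid of degrees in which `P` is nonzero.  Then the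
restriction of `Lex` to `Γ` is a well-ordering (every nonempty subset of `Γ` has a
`Lex`-least element) if and only if every nonzero `d ∈ Γ` satisfies `0 <_Lex d`. -/
theorem stmt_4 {m n : ℕ} (W : Matrix (Fin m) (Fin n) ℤ)
    (hrows : LinearIndependent ℤ (fun i : Fin m => (fun j => W i j : Fin n → ℤ)))
    (hcols : ∀ j : Fin n, ∃ i : Fin m, W i j ≠ 0) :
    (∀ S : Set (Fin m → ℤ), S ⊆ Set.range (wdeg W) → S.Nonempty →
        ∃ d ∈ S, ∀ d' ∈ S, toLex d ≤ toLex d') ↔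
      (∀ d ∈ Set.range (wdeg W), d ≠ 0 → toLex (0 : Fin m → ℤ) < toLex d) := by
  constructor
  · intro hwo d hd hdne
    by_contra hlt
    have hneg : toLex d < toLex (0 : Fin m → ℤ) := by
      rcases lex_trichotomy (toLex d) (toLex (0 : Fin m → ℤ)) with h | h | h
      · exact h
      · exact absurd (toLex.injective h) hdne
      · exact absurd h hlt
    obtain ⟨α, rfl⟩ := hd
    set S : Set (Fin m → ℤ) := {x | ∃ k : ℕ, x = wdeg W ((k + 1) • α)} with hSdef
    obtain ⟨e, ⟨k, rfl⟩, hmin⟩ :=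
      hwo S (by rintro x ⟨k, rfl⟩; exact ⟨_, rfl⟩) ⟨wdeg W ((0 + 1) • α), 0, rfl⟩
    have hmem : wdeg W ((k + 1 + 1) • α) ∈ S := ⟨k + 1, rfl⟩
    have hle := hmin _ hmem
    have heq : wdeg W ((k + 1 + 1) • α) = wdeg W ((k + 1) • α) + wdeg W α := by
      rw [← wdeg_add]; congr 1; rw [add_smul, one_smul]
    rw [heq] at hle
    have : toLex (wdeg W ((k + 1) • α) + wdeg W α)
        < toLex (wdeg W ((k + 1) • α)) := by
      have : toLex (wdeg W ((k + 1) • α)) + toLex (wdeg W α)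
          < toLex (wdeg W ((k + 1) • α)) + toLex (0 : Fin m → ℤ) :=
        add_lt_add_right hneg _
      simpa using this
    exact absurd (lt_of_le_of_lt hle this) (lt_irrefl _)
  · intro hpos S hsub hne
    set A : Set (Fin n →₀ ℕ) := wdeg W ⁻¹' S with hAdef
    have hmono : Monotone (fun α : Fin n →₀ ℕ => toLex (wdeg W α)) := by
      intro α β hle
      have hsplit : wdeg W β = wdeg W α + wdeg W (β - α) := by
        rw [← wdeg_add, add_tsub_cancel_of_le hle]
      have h0 : toLex (0 : Fin m → ℤ) ≤ toLex (wdeg W (β - α)) := by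
        rcases eq_or_ne (wdeg W (β - α)) 0 with h | h
        · rw [h]
        · exact (hpos _ ⟨_, rfl⟩ h).le
      calc toLex (wdeg W α) = toLex (wdeg W α) + toLex (0 : Fin m → ℤ) := by simp
        _ ≤ toLex (wdeg W α) + toLex (wdeg W (β - α)) := add_le_add_right h0 _
        _ = toLex (wdeg W β) := by rw [hsplit]; rfl
    have hpwo : ((fun α : Fin n →₀ ℕ => toLex (wdeg W α)) '' A).IsPWO :=
      (Set.isPWO_of_wellQuasiOrderedLE A).image_of_monotone hmono
    have hwf := hpwo.isWF
    have hAne : A.Nonempty := by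
      obtain ⟨d, hd⟩ := hne
      obtain ⟨α, rfl⟩ := hsub hd
      exact ⟨α, hd⟩
    have hne' : ((fun α : Fin n →₀ ℕ => toLex (wdeg W α)) '' A).Nonempty := hAne.image _
    obtain ⟨α, hαA, hαe⟩ := hwf.min_mem hne'
    refine ⟨wdeg W α, hαA, ?_⟩
    intro d' hd'
    obtain ⟨β, rfl⟩ := hsub hd'
    have hβ : toLex (wdeg W β) ∈ (fun α : Fin n →₀ ℕ => toLex (wdeg W α)) '' A :=
      ⟨β, hd', rfl⟩
    have := hwf.not_lt_min hne' hβ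
    rw [← hαe] at this
    exact lex_le_of_not_lt this
end

section
/- Adding a top-degree generator preserves minimality: let the grading given by W be positive, fix shifts δ_1,…,δ_r ∈ ℤ^m, and let g_1,…,g_s ∈ P^r be homogeneous vectors, g_k of degree d_k ∈ ℤ^m, forming a minimal system of generators of M = Span_P(g_1,…,g_s), i.e. g_k ∉ Span_P({g_j : j ≠ k}) for every k. Let g_{s+1} ∈ P^r be a homogeneous vector of degree d_{s+1} with g_{s+1} ∉ M and d_k ≤_Lex d_{s+1} for all k = 1,…,s. Then {g_1,…,g_s,g_{s+1}} is a minimal system of generators of M + Span_P(g_{s+1}): for every k ∈ {1,…,s+1}, g_k ∉ Span_P({g_j : 1 ≤ j ≤ s+1, j ≠ k}). -/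
open MvPolynomial

/-- The grading given by `W` is positive: the rows of `W` are `ℤ`-linearly independent,
no column of `W` is zero, and the first non-zero entry of each column of `W` is positive. -/
def PositiveGrading {m n : ℕ} (W : Matrix (Fin m) (Fin n) ℤ) : Prop :=
  LinearIndependent ℤ (fun i : Fin m => (fun j => W i j : Fin n → ℤ)) ∧
  (∀ j : Fin n, ∃ i : Fin m, W i j ≠ 0) ∧
  (∀ j : Fin n, ∃ i : Fin m, 0 < W i j ∧ ∀ i' < i, W i' j = 0)

/-- A vector `v ∈ P^r` is homogeneous of degree `d ∈ ℤ^m` (with respect to the shifts `δ`)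
if each component `v i` is `W`-homogeneous of degree `d - δ i`. -/
def IsWHomogeneousVec {K : Type*} [CommSemiring K] {m n r : ℕ} (W : Matrix (Fin m) (Fin n) ℤ)
    (δ : Fin r → Fin m → ℤ) (v : Fin r → MvPolynomial (Fin n) K) (d : Fin m → ℤ) : Prop :=
  ∀ i : Fin r, ∀ α ∈ (v i).support, wdeg W α = d - δ i

/-! ### Auxiliary lemmas -/

section Aux

variable {m n : ℕ}

/-- Lex-positivity of a vector in `ℤ^m`, unfolded. -/
def LexPos (v : Fin m → ℤ) : Prop := ∃ i, (∀ j < i, v j = 0) ∧ 0 < v i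

/-- Lex-nonnegativity of a vector in `ℤ^m`, unfolded. -/
def LexNN (v : Fin m → ℤ) : Prop := v = 0 ∨ LexPos v

lemma LexPos.toLex_lt {v : Fin m → ℤ} (hv : LexPos v) : (0 : Lex (Fin m → ℤ)) < toLex v := by
  obtain ⟨i, h1, h2⟩ := hv
  exact ⟨i, fun j hj => (h1 j hj).symm, h2⟩

lemma LexNN.toLex_le {v : Fin m → ℤ} (hv : LexNN v) : (0 : Lex (Fin m → ℤ)) ≤ toLex v := by
  rcases hv with rfl | hv
  · exact le_of_eq rfl
  · exact le_of_lt hv.toLex_lt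

lemma LexPos.add {a b : Fin m → ℤ} (ha : LexPos a) (hb : LexPos b) : LexPos (a + b) := by
  obtain ⟨i₁, hz₁, hp₁⟩ := ha
  obtain ⟨i₂, hz₂, hp₂⟩ := hb
  refine ⟨min i₁ i₂, fun j hj => ?_, ?_⟩
  · have h1 := hz₁ j (lt_of_lt_of_le hj (min_le_left _ _))
    have h2 := hz₂ j (lt_of_lt_of_le hj (min_le_right _ _))
    simp [Pi.add_apply, h1, h2]
  · rcases lt_trichotomy i₁ i₂ with hlt | rfl | hgt
    · rw [min_eq_left hlt.le]
      have hb0 : b i₁ = 0 := hz₂ i₁ hlt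
      simpa [Pi.add_apply, hb0] using hp₁
    · rw [min_self]
      exact add_pos hp₁ hp₂
    · rw [min_eq_right hgt.le]
      have ha0 : a i₂ = 0 := hz₁ i₂ hgt
      simpa [Pi.add_apply, ha0] using hp₂

lemma LexPos.add_nn {a b : Fin m → ℤ} (ha : LexPos a) (hb : LexNN b) : LexPos (a + b) := by
  rcases hb with rfl | hb
  · simpa using ha
  · exact ha.add hb

lemma LexNN.add {a b : Fin m → ℤ} (ha : LexNN a) (hb : LexNN b) : LexNN (a + b) := by
  rcases ha with rfl | ha
  · simpa using hb
  · exact Or.inr (ha.add_nn hb)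

lemma LexPos.nsmul {v : Fin m → ℤ} (hv : LexPos v) {c : ℕ} (hc : c ≠ 0) : LexPos (c • v) := by
  obtain ⟨i, h1, h2⟩ := hv
  refine ⟨i, fun j hj => ?_, ?_⟩
  · simp [Pi.smul_apply, h1 j hj]
  · have : (0 : ℤ) < (c : ℤ) := by exact_mod_cast Nat.pos_of_ne_zero hc
    simpa [Pi.smul_apply, nsmul_eq_mul] using mul_pos this h2

lemma LexPos.nsmul_nn {v : Fin m → ℤ} (hv : LexPos v) (c : ℕ) : LexNN (c • v) := by
  rcases Nat.eq_zero_or_pos c with rfl | hc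
  · exact Or.inl (by simp)
  · exact Or.inr (hv.nsmul hc.ne')

variable (W : Matrix (Fin m) (Fin n) ℤ)

/-- The columns of `W`, used as weights. -/
def Wcol : Fin n → (Fin m → ℤ) := fun j i => W i j

lemma weight_eq_sum (α : Fin n →₀ ℕ) :
    Finsupp.weight (Wcol W) α = ∑ j, (α j) • (Wcol W j) := by
  classical
  rw [Finsupp.weight_apply, Finsupp.sum]
  refine Finset.sum_subset (Finset.subset_univ _) ?_
  intro j _ hj
  simp [Finsupp.notMem_support_iff.mp hj]

lemma weight_eq_wdeg (α : Fin n →₀ ℕ) : Finsupp.weight (Wcol W) α = wdeg W α := by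
  rw [weight_eq_sum]
  funext i
  simp only [wdeg, Finset.sum_apply, Pi.smul_apply, Wcol, nsmul_eq_mul, Pi.mul_apply,
    Pi.natCast_apply, smul_eq_mul]

lemma lexPos_col (hW : PositiveGrading W) (j : Fin n) : LexPos (Wcol W j) := by
  obtain ⟨i, hpos, hzero⟩ := hW.2.2 j
  exact ⟨i, hzero, hpos⟩

lemma lexNN_wdeg (hW : PositiveGrading W) (α : Fin n →₀ ℕ) : LexNN (wdeg W α) := by
  rw [← weight_eq_wdeg, weight_eq_sum]
  refine Finset.sum_induction _ _ (fun a b ha hb => ha.add hb) (Or.inl rfl) ?_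
  exact fun j _ => (lexPos_col W hW j).nsmul_nn (α j)

lemma lexPos_wdeg (hW : PositiveGrading W) {α : Fin n →₀ ℕ} (hα : α ≠ 0) :
    LexPos (wdeg W α) := by
  obtain ⟨j₀, hj₀⟩ : ∃ j, α j ≠ 0 := by
    by_contra hc
    push_neg at hc
    exact hα (Finsupp.ext fun j => hc j)
  rw [← weight_eq_wdeg, weight_eq_sum]
  rw [← Finset.add_sum_erase _ _ (Finset.mem_univ j₀)]
  refine ((lexPos_col W hW j₀).nsmul hj₀).add_nn ?_
  refine Finset.sum_induction _ _ (fun a b ha hb => ha.add hb) (Or.inl rfl) ?_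
  exact fun j _ => (lexPos_col W hW j).nsmul_nn (α j)

variable {K : Type*} [Field K]

/-- Projection of a product with a homogeneous polynomial. -/
lemma comp_mul_homog {c : Fin m → ℤ} {p : MvPolynomial (Fin n) K}
    (hp : p.IsWeightedHomogeneous (Wcol W) c) (q : MvPolynomial (Fin n) K) (e : Fin m → ℤ) :
    weightedHomogeneousComponent (Wcol W) e (q * p) =
      weightedHomogeneousComponent (Wcol W) (e - c) q * p := by
  classical
  ext d
  rw [coeff_weightedHomogeneousComponent, coeff_mul, coeff_mul]
  split_ifs with hd
  · refine Finset.sum_congr rfl fun uv huv => ?_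
    rw [coeff_weightedHomogeneousComponent]
    by_cases hv : coeff uv.2 p = 0
    · simp [hv]
    · rw [if_pos]
      have hsum : uv.1 + uv.2 = d := Finset.HasAntidiagonal.mem_antidiagonal.mp huv
      have h3 : Finsupp.weight (Wcol W) uv.1 + c = e := by
        rw [← hp hv, ← map_add, hsum, hd]
      exact eq_sub_of_add_eq h3
  · refine (Finset.sum_eq_zero fun uv huv => ?_).symm
    rw [coeff_weightedHomogeneousComponent]
    split_ifs with h1
    · by_cases hv : coeff uv.2 p = 0
      · rw [hv, mul_zero]
      · refine absurd ?_ hd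
        have hsum : uv.1 + uv.2 = d := Finset.HasAntidiagonal.mem_antidiagonal.mp huv
        rw [← hsum, map_add, h1, hp hv]
        abel
    · rw [zero_mul]

/-- Components of lex-negative degree vanish. -/
lemma comp_neg_eq_zero (hW : PositiveGrading W) {e : Fin m → ℤ} (he : toLex e < 0)
    (q : MvPolynomial (Fin n) K) : weightedHomogeneousComponent (Wcol W) e q = 0 := by
  classical
  ext d
  rw [coeff_weightedHomogeneousComponent, coeff_zero, if_neg]
  intro hc
  rw [weight_eq_wdeg] at hc
  have h1 : (0 : Lex (Fin m → ℤ)) ≤ toLex e := by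
    rw [← hc]; exact (lexNN_wdeg W hW d).toLex_le
  exact lt_irrefl _ (lt_of_le_of_lt h1 he)

/-- The degree-0 component is the constant term. -/
lemma comp_zero_eq_C (hW : PositiveGrading W) (q : MvPolynomial (Fin n) K) :
    weightedHomogeneousComponent (Wcol W) 0 q = C (coeff 0 q) := by
  classical
  ext d
  rw [coeff_weightedHomogeneousComponent, coeff_C]
  by_cases hd : d = 0
  · subst hd
    rw [if_pos rfl, if_pos]
    rw [weight_eq_wdeg]
    funext i
    simp [wdeg]
  · rw [if_neg (Ne.symm hd), if_neg]
    intro hc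
    rw [weight_eq_wdeg] at hc
    have h1 : (0 : Lex (Fin m → ℤ)) < toLex (wdeg W d) := (lexPos_wdeg W hW hd).toLex_lt
    rw [hc] at h1
    exact lt_irrefl _ h1

end Aux

/-- Adding a top-degree generator preserves minimality: if `g_1,…,g_s` is a minimal system
of homogeneous generators of `M`, and `h ∉ M` is homogeneous of degree `≥_Lex` all the
degrees of the `g_k`, then `g_1,…,g_s,h` is a minimal system of generators of
`M + Span_P(h)`. -/
theorem stmt_12 {K : Type*} [Field K] {m n r s : ℕ} (W : Matrix (Fin m) (Fin n) ℤ)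
    (hW : PositiveGrading W) (δ : Fin r → Fin m → ℤ)
    (g : Fin s → (Fin r → MvPolynomial (Fin n) K)) (d : Fin s → Fin m → ℤ)
    (hgh : ∀ k, IsWHomogeneousVec W δ (g k) (d k))
    (hmin : ∀ k : Fin s, g k ∉ Submodule.span (MvPolynomial (Fin n) K) (g '' {j | j ≠ k}))
    (h : Fin r → MvPolynomial (Fin n) K) (dh : Fin m → ℤ)
    (hhhom : IsWHomogeneousVec W δ h dh)
    (hhM : h ∉ Submodule.span (MvPolynomial (Fin n) K) (Set.range g))
    (hdeg : ∀ k : Fin s, toLex (d k) ≤ toLex dh) :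
    ∀ k : Fin (s + 1),
      (Fin.snoc g h : Fin (s + 1) → (Fin r → MvPolynomial (Fin n) K)) k ∉
        Submodule.span (MvPolynomial (Fin n) K)
          ((Fin.snoc g h : Fin (s + 1) → (Fin r → MvPolynomial (Fin n) K)) '' {j | j ≠ k}) := by
  classical
  -- homogeneity in mathlib's language
  have hgw : ∀ (j : Fin s) (i : Fin r),
      (g j i).IsWeightedHomogeneous (Wcol W) (d j - δ i) := by
    intro j i α hα
    rw [weight_eq_wdeg]
    exact hgh j i α (mem_support_iff.mpr hα)
  have hhw : ∀ i : Fin r, (h i).IsWeightedHomogeneous (Wcol W) (dh - δ i) := by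
    intro i α hα
    rw [weight_eq_wdeg]
    exact hhhom i α (mem_support_iff.mpr hα)
  intro k
  induction k using Fin.lastCases with
  | last =>
    have himg : (Fin.snoc g h : Fin (s + 1) → (Fin r → MvPolynomial (Fin n) K)) '' {j | j ≠ Fin.last s} =
        Set.range g := by
      ext y
      constructor
      · rintro ⟨j, hj, rfl⟩
        obtain ⟨i, rfl⟩ := Fin.exists_castSucc_eq.mpr hj
        exact ⟨i, by simp⟩
      · rintro ⟨i, rfl⟩
        exact ⟨Fin.castSucc i, (Fin.castSucc_lt_last i).ne, by simp⟩
    rw [Fin.snoc_last, himg]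
    exact hhM
  | cast k₀ =>
    set A : Set (Fin r → MvPolynomial (Fin n) K) := g '' {j | j ≠ k₀} with hA
    have himg : (Fin.snoc g h : Fin (s + 1) → (Fin r → MvPolynomial (Fin n) K)) '' {j | j ≠ Fin.castSucc k₀} =
        insert h A := by
      ext y
      constructor
      · rintro ⟨j, hj, rfl⟩
        rcases Fin.eq_castSucc_or_eq_last j with ⟨i, rfl⟩ | rfl
        · refine Or.inr ⟨i, fun hik => hj (by rw [hik]), by simp⟩
        · exact Or.inl (by simp)
      · rintro (rfl | ⟨i, hi, rfl⟩)
        · exact ⟨Fin.last s, fun hc => (Fin.castSucc_lt_last k₀).ne (id hc.symm), by simp⟩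
        · exact ⟨Fin.castSucc i, fun hc => hi (Fin.castSucc_injective _ hc), by simp⟩
    rw [Fin.snoc_castSucc, himg]
    intro hmem
    rw [Submodule.mem_span_insert] at hmem
    obtain ⟨q, z, hz, heq⟩ := hmem
    obtain ⟨N, cf, xf, hsum⟩ := Submodule.mem_span_set'.mp hz
    -- choose indices for the generators appearing in z
    have hxf : ∀ t : Fin N, ∃ j : Fin s, j ≠ k₀ ∧ g j = (xf t : Fin r → MvPolynomial (Fin n) K) := by
      intro t
      obtain ⟨j, hj, hje⟩ := (xf t).2
      exact ⟨j, hj, hje⟩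
    choose jf hjf hgjf using hxf
    -- the projection of the equation to degree `d k₀`
    set z' : Fin r → MvPolynomial (Fin n) K :=
      ∑ t : Fin N, (weightedHomogeneousComponent (Wcol W) (d k₀ - d (jf t)) (cf t)) • g (jf t)
      with hz'
    have hz'mem : z' ∈ Submodule.span (MvPolynomial (Fin n) K) A := by
      refine Submodule.sum_mem _ fun t _ => Submodule.smul_mem _ _ ?_
      exact Submodule.subset_span ⟨jf t, hjf t, rfl⟩
    have hproj : g k₀ = (weightedHomogeneousComponent (Wcol W) (d k₀ - dh) q) • h + z' := by
      funext i
      have step0 : g k₀ i = weightedHomogeneousComponent (Wcol W) (d k₀ - δ i) (g k₀ i) :=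
        ((hgw k₀ i).weightedHomogeneousComponent_same).symm
      have step1 : (g k₀ : Fin r → MvPolynomial (Fin n) K) i = q * h i + z i := by
        rw [heq]; simp [Pi.add_apply, Pi.smul_apply, smul_eq_mul]
      have stepz : z i = ∑ t : Fin N, cf t * (xf t : Fin r → MvPolynomial (Fin n) K) i := by
        rw [← hsum]
        simp [Finset.sum_apply, Pi.smul_apply, smul_eq_mul]
      have steph : weightedHomogeneousComponent (Wcol W) (d k₀ - δ i) (q * h i) =
          weightedHomogeneousComponent (Wcol W) (d k₀ - dh) q * h i := by
        rw [comp_mul_homog W (hhw i) q (d k₀ - δ i), sub_sub_sub_cancel_right]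
      have stepg : ∀ t : Fin N,
          weightedHomogeneousComponent (Wcol W) (d k₀ - δ i) (cf t * (xf t : Fin r → MvPolynomial (Fin n) K) i) =
            weightedHomogeneousComponent (Wcol W) (d k₀ - d (jf t)) (cf t) * g (jf t) i := by
        intro t
        rw [← hgjf t, comp_mul_homog W (hgw (jf t) i) (cf t) (d k₀ - δ i),
          sub_sub_sub_cancel_right]
      calc g k₀ i = weightedHomogeneousComponent (Wcol W) (d k₀ - δ i) (g k₀ i) := step0
        _ = weightedHomogeneousComponent (Wcol W) (d k₀ - δ i) (q * h i + z i) := by rw [← step1]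
        _ = weightedHomogeneousComponent (Wcol W) (d k₀ - δ i) (q * h i) +
              weightedHomogeneousComponent (Wcol W) (d k₀ - δ i) (z i) := by rw [map_add]
        _ = weightedHomogeneousComponent (Wcol W) (d k₀ - dh) q * h i +
              ∑ t : Fin N, weightedHomogeneousComponent (Wcol W) (d k₀ - δ i)
                (cf t * (xf t : Fin r → MvPolynomial (Fin n) K) i) := by rw [steph, stepz, map_sum]
        _ = weightedHomogeneousComponent (Wcol W) (d k₀ - dh) q * h i +
              ∑ t : Fin N, weightedHomogeneousComponent (Wcol W) (d k₀ - d (jf t)) (cf t) *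
                g (jf t) i := by rw [Finset.sum_congr rfl fun t _ => stepg t]
        _ = (weightedHomogeneousComponent (Wcol W) (d k₀ - dh) q) • h i + z' i := by
              rw [hz']; simp [Finset.sum_apply, Pi.smul_apply, smul_eq_mul]
        _ = ((weightedHomogeneousComponent (Wcol W) (d k₀ - dh) q) • h + z') i := by
              simp [Pi.add_apply, Pi.smul_apply]
    -- now use the degree comparison
    rcases lt_or_eq_of_le (hdeg k₀) with hlt | heqd
    · -- strictly smaller degree: the coefficient of h vanishes
      have hneg : toLex (d k₀ - dh) < 0 := by
        obtain ⟨i, h1, h2⟩ := hlt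
        refine ⟨i, fun j hj => ?_, ?_⟩
        · have h3 : d k₀ j = dh j := h1 j hj
          show (d k₀ - dh) j = (0 : Fin m → ℤ) j
          simp [Pi.sub_apply, h3]
        · have h4 : d k₀ i < dh i := h2
          show (d k₀ - dh) i < (0 : Fin m → ℤ) i
          simpa [Pi.sub_apply, sub_neg] using h4
      rw [comp_neg_eq_zero W hW hneg q, zero_smul, zero_add] at hproj
      exact hmin k₀ (hproj ▸ hz'mem)
    · -- equal degree
      have hde : d k₀ = dh := toLex.injective heqd
      rw [hde, sub_self, comp_zero_eq_C W hW q] at hproj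
      by_cases hc : coeff 0 q = 0
      · rw [hc, map_zero, zero_smul, zero_add] at hproj
        exact hmin k₀ (hproj ▸ hz'mem)
      · apply hhM
        have hsub : (C (coeff 0 q) : MvPolynomial (Fin n) K) • h = g k₀ - z' := eq_sub_of_add_eq hproj.symm
        have hh : h = (C (coeff 0 q)⁻¹ : MvPolynomial (Fin n) K) • (g k₀ - z') := by
          rw [← hsub, smul_smul, ← C_mul, inv_mul_cancel₀ hc, C_1, one_smul]
        rw [hh]
        refine Submodule.smul_mem _ _ (Submodule.sub_mem _ ?_ ?_)
        · exact Submodule.subset_span ⟨k₀, rfl⟩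
        · refine Submodule.span_mono ?_ hz'mem
          rintro y ⟨j, _, rfl⟩
          exact ⟨j, rfl⟩
end
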